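/- Let ℓ, ℓ' : ℝ → ℝ≥0 be measurable functions with finite positive integrals of ℓ^{d−1} and ℓ'^{d−1}, and let c = (∫ ξ·ℓ(ξ)^{d−1} dξ)/(∫ ℓ(ξ)^{d−1} dξ) be the weighted center with density ℓ^{d−1}. If ℓ'(ξ) ≤ ℓ(ξ) for all ξ ≤ c and ℓ'(ξ) = ℓ(ξ) for all ξ > c, then the weighted center c' = (∫ ξ·ℓ'(ξ)^{d−1} dξ)/(∫ ℓ'(ξ)^{d−1} dξ) satisfies c' ≥ c. -/

import Mathlib

open MeasureTheory

theorem weighted_center_shift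
    (d : ℕ) (hd : 1 ≤ d) (ℓ ℓ' : ℝ → ℝ)
    (hℓ0 : ∀ ξ, 0 ≤ ℓ ξ) (hℓ'0 : ∀ ξ, 0 ≤ ℓ' ξ)
    (hmeas : Measurable ℓ) (hmeas' : Measurable ℓ')
    (hint : Integrable (fun ξ => ℓ ξ ^ (d - 1)))
    (hint' : Integrable (fun ξ => ℓ' ξ ^ (d - 1)))
    (hxint : Integrable (fun ξ => ξ * ℓ ξ ^ (d - 1)))
    (hxint' : Integrable (fun ξ => ξ * ℓ' ξ ^ (d - 1)))
    (hpos : 0 < ∫ ξ, ℓ ξ ^ (d - 1))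
    (hpos' : 0 < ∫ ξ, ℓ' ξ ^ (d - 1))
    (c : ℝ) (hc : c = (∫ ξ, ξ * ℓ ξ ^ (d - 1)) / (∫ ξ, ℓ ξ ^ (d - 1)))
    (hle : ∀ ξ ≤ c, ℓ' ξ ≤ ℓ ξ)
    (heq : ∀ ξ > c, ℓ' ξ = ℓ ξ) :
    c ≤ (∫ ξ, ξ * ℓ' ξ ^ (d - 1)) / (∫ ξ, ℓ' ξ ^ (d - 1)) := by
  -- pointwise inequality (ξ - c) * ℓ^(d-1) ≤ (ξ - c) * ℓ'^(d-1)
  have hpt : ∀ ξ, (ξ - c) * ℓ ξ ^ (d - 1) ≤ (ξ - c) * ℓ' ξ ^ (d - 1) := by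
    intro ξ
    rcases le_or_gt ξ c with h | h
    · have h1 : ℓ' ξ ^ (d - 1) ≤ ℓ ξ ^ (d - 1) :=
        pow_le_pow_left₀ (hℓ'0 ξ) (hle ξ h) _
      have h2 : ξ - c ≤ 0 := by linarith
      exact mul_le_mul_of_nonpos_left h1 h2
    · rw [heq ξ h]
  -- integrability of the shifted integrands
  have hI : Integrable (fun ξ => (ξ - c) * ℓ ξ ^ (d - 1)) := by
    have := hxint.sub (hint.const_mul c)
    refine this.congr (Filter.Eventually.of_forall fun ξ => ?_)
    simp only [Pi.sub_apply]; ring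
  have hI' : Integrable (fun ξ => (ξ - c) * ℓ' ξ ^ (d - 1)) := by
    have := hxint'.sub (hint'.const_mul c)
    refine this.congr (Filter.Eventually.of_forall fun ξ => ?_)
    simp only [Pi.sub_apply]; ring
  have hmono : (∫ ξ, (ξ - c) * ℓ ξ ^ (d - 1)) ≤ ∫ ξ, (ξ - c) * ℓ' ξ ^ (d - 1) :=
    integral_mono hI hI' hpt
  have hsplit : (∫ ξ, (ξ - c) * ℓ ξ ^ (d - 1))
      = (∫ ξ, ξ * ℓ ξ ^ (d - 1)) - c * ∫ ξ, ℓ ξ ^ (d - 1) := by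
    have e : (fun ξ => (ξ - c) * ℓ ξ ^ (d - 1))
        = fun ξ => ξ * ℓ ξ ^ (d - 1) - c * ℓ ξ ^ (d - 1) := by
      funext ξ; ring
    rw [e, integral_sub hxint (hint.const_mul c), MeasureTheory.integral_const_mul]
  have hsplit' : (∫ ξ, (ξ - c) * ℓ' ξ ^ (d - 1))
      = (∫ ξ, ξ * ℓ' ξ ^ (d - 1)) - c * ∫ ξ, ℓ' ξ ^ (d - 1) := by
    have e : (fun ξ => (ξ - c) * ℓ' ξ ^ (d - 1))
        = fun ξ => ξ * ℓ' ξ ^ (d - 1) - c * ℓ' ξ ^ (d - 1) := by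
      funext ξ; ring
    rw [e, integral_sub hxint' (hint'.const_mul c), MeasureTheory.integral_const_mul]
  have hzero : (∫ ξ, (ξ - c) * ℓ ξ ^ (d - 1)) = 0 := by
    rw [hsplit, hc]
    field_simp
    ring
  rw [hzero, hsplit'] at hmono
  rw [le_div_iff₀ hpos']
  linarith
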